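/- Let (X, μ) be a non-atomic probability space with a tree structure 𝒯. For every I ∈ 𝒯 and every a with 0 < a < 1, there exists a subfamily ℱ(I) ⊆ 𝒯 consisting of pairwise almost disjoint subsets of I such that μ(⋃_{J ∈ ℱ(I)} J) = Σ_{J ∈ ℱ(I)} μ(J) = (1-a) μ(I). -/

import Mathlib

open MeasureTheory Set Filter

/-- A tree structure on a probability space `(X, μ)` in the sense of Definition 2.1:
`𝒯 = ⋃ₘ 𝒯₍ₘ₎` with `𝒯₍₀₎ = {X}`, each `I ∈ 𝒯` split into at least two pairwise almost
disjoint children covering `I`, all elements measurable of positive measure, and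
`sup_{I ∈ 𝒯₍ₘ₎} μ(I) → 0`. -/
structure TreeStruct {X : Type*} [MeasurableSpace X] (μ : Measure X) where
  level : ℕ → Set (Set X)
  child : Set X → Set (Set X)
  level_zero : level 0 = {Set.univ}
  level_succ : ∀ m, level (m + 1) = ⋃ I ∈ level m, child I
  mem_meas : ∀ m, ∀ I ∈ level m, MeasurableSet I
  mem_pos : ∀ m, ∀ I ∈ level m, 0 < μ I
  child_countable : ∀ I, (child I).Countable
  child_nontrivial : ∀ m, ∀ I ∈ level m, ∃ J ∈ child I, ∃ K ∈ child I, J ≠ K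
  child_subset : ∀ m, ∀ I ∈ level m, ∀ J ∈ child I, J ⊆ I
  child_almost_disjoint :
    ∀ m, ∀ I ∈ level m, ∀ J ∈ child I, ∀ K ∈ child I, J ≠ K → μ (J ∩ K) = 0
  child_cover : ∀ m, ∀ I ∈ level m, I = ⋃₀ child I
  level_small : Tendsto (fun m => ⨆ I ∈ level m, μ I) atTop (nhds 0)

/-- Membership in the tree: `I ∈ 𝒯` iff it belongs to some level. -/
def TreeStruct.Mem {X : Type*} [MeasurableSpace X] {μ : Measure X}
    (T : TreeStruct μ) (I : Set X) : Prop := ∃ m, I ∈ T.level m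

/-- The maximal operator associated to the tree `𝒯`:
`ℳ_𝒯 φ(x) = sup { (1/μ(I)) ∫_I |φ| dμ : x ∈ I ∈ 𝒯 }`. -/
noncomputable def maxOp {X : Type*} [MeasurableSpace X] {μ : Measure X}
    (T : TreeStruct μ) (φ : X → ℝ) (x : X) : ℝ :=
  sSup ((fun I => (∫ y in I, |φ y| ∂μ) / (μ I).toReal) '' {I | T.Mem I ∧ x ∈ I})


open scoped ENNReal

section AuxLemmas

open scoped ENNReal

variable {X : Type*} [MeasurableSpace X] {μ : Measure X}

lemma TreeStruct.child_level (T : TreeStruct μ) {m : ℕ} {J : Set X} (hJ : J ∈ T.level m)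
    {K : Set X} (hK : K ∈ T.child J) : K ∈ T.level (m + 1) := by
  rw [T.level_succ]
  exact Set.mem_biUnion hJ hK

lemma TreeStruct.sum_child (T : TreeStruct μ) {m : ℕ} {J : Set X} (hJ : J ∈ T.level m) :
    ∑' K : T.child J, μ (K : Set X) = μ J := by
  haveI : Countable (T.child J) := (T.child_countable J).to_subtype
  have hd : Pairwise (Function.onFun (AEDisjoint μ) (fun K : T.child J => (K : Set X))) := by
    rintro ⟨A, hA⟩ ⟨B, hB⟩ hne
    exact T.child_almost_disjoint m J hJ A hA B hB (fun h => hne (Subtype.ext h))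
  have hm : ∀ K : T.child J, NullMeasurableSet (K : Set X) μ := by
    rintro ⟨A, hA⟩
    exact (T.mem_meas (m+1) A (T.child_level hJ hA)).nullMeasurableSet
  have h1 : μ (⋃ K : T.child J, (K : Set X)) = ∑' K : T.child J, μ (K : Set X) :=
    measure_iUnion₀ hd hm
  rw [← h1, ← Set.sUnion_eq_iUnion, ← T.child_cover m J hJ]

lemma TreeStruct.step_exists (T : TreeStruct μ) [IsProbabilityMeasure μ] {m : ℕ} {J : Set X}
    (hJ : J ∈ T.level m) {δ : ℝ≥0∞} (hδ : δ < μ J) :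
    ∃ (S : Finset (Set X)) (K : Set X), ↑S ⊆ T.child J ∧ K ∈ T.child J ∧ K ∉ S ∧
      (∑ A ∈ S, μ A) + (δ - ∑ A ∈ S, μ A) = δ ∧ δ - ∑ A ∈ S, μ A < μ K := by
  classical
  have hsum := T.sum_child hJ
  have h2 : δ < ⨆ s : Finset (T.child J), ∑ K ∈ s, μ (K : Set X) := by
    rw [← ENNReal.tsum_eq_iSup_sum, hsum]; exact hδ
  obtain ⟨s0, hs0⟩ := lt_iSup_iff.mp h2
  have hP : ∃ n, ∃ S : Finset (Set X), ↑S ⊆ T.child J ∧ S.card = n ∧ δ < ∑ A ∈ S, μ A := by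
    refine ⟨(s0.image Subtype.val).card, s0.image Subtype.val, ?_, rfl, ?_⟩
    · intro A hA
      simp only [Finset.coe_image, Set.mem_image, Finset.mem_coe] at hA
      obtain ⟨K, _, rfl⟩ := hA
      exact K.2
    · rwa [Finset.sum_image (fun x _ y _ h => Subtype.coe_injective h)]
  obtain ⟨S, hSsub, hScard, hSlt⟩ := Nat.find_spec hP
  have hn0 : Nat.find hP ≠ 0 := by
    intro h
    rw [h, Finset.card_eq_zero] at hScard
    subst hScard
    simp at hSlt
  have hSne : S.Nonempty := Finset.card_pos.mp (by omega)
  obtain ⟨K, hK⟩ := hSne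
  have hcard' : (S.erase K).card < Nat.find hP := by
    rw [Finset.card_erase_of_mem hK, hScard]; omega
  have hle : ∑ A ∈ S.erase K, μ A ≤ δ := by
    by_contra h
    push_neg at h
    exact Nat.find_min hP hcard' ⟨S.erase K,
      (Finset.coe_subset.mpr (Finset.erase_subset K S)).trans hSsub, rfl, h⟩
  have hsplit : μ K + ∑ A ∈ S.erase K, μ A = ∑ A ∈ S, μ A :=
    Finset.add_sum_erase S _ hK
  have hlt' : δ - ∑ A ∈ S.erase K, μ A < μ K := by
    by_contra h
    push_neg at h
    have : ∑ A ∈ S, μ A ≤ δ := by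
      rw [← hsplit]
      calc μ K + ∑ A ∈ S.erase K, μ A ≤ (δ - ∑ A ∈ S.erase K, μ A) + ∑ A ∈ S.erase K, μ A :=
            add_le_add_left h _
        _ = δ := by rw [add_comm]; exact add_tsub_cancel_of_le hle
    exact absurd hSlt (not_lt.mpr this)
  exact ⟨S.erase K, K, (Finset.coe_subset.mpr (Finset.erase_subset K S)).trans hSsub,
    hSsub hK, Finset.notMem_erase K S, add_tsub_cancel_of_le hle, hlt'⟩

end AuxLemmas
/-- Lemma 2.1: for every `I ∈ 𝒯` and every `a ∈ (0,1)` there is a subfamily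
`ℱ(I) ⊆ 𝒯` of pairwise almost disjoint subsets of `I` with
`μ(⋃ ℱ(I)) = Σ_{J ∈ ℱ(I)} μ(J) = (1-a) μ(I)`. -/
theorem exists_subfamily {X : Type*} [MeasurableSpace X]
    (μ : Measure X) [IsProbabilityMeasure μ] [NullSingletonClass μ] (T : TreeStruct μ)
    (I : Set X) (hI : T.Mem I) (a : ℝ) (ha0 : 0 < a) (ha1 : a < 1) :
    ∃ F : Set (Set X), F.Countable ∧
      (∀ J ∈ F, T.Mem J) ∧
      (∀ J ∈ F, J ⊆ I) ∧
      (∀ J ∈ F, ∀ K ∈ F, J ≠ K → μ (J ∩ K) = 0) ∧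
      μ (⋃₀ F) = ENNReal.ofReal (1 - a) * μ I ∧
      ∑' J : F, μ (J : Set X) = ENNReal.ofReal (1 - a) * μ I := by
  classical
  obtain ⟨m0, hIm⟩ := hI
  have hμI0 : 0 < μ I := T.mem_pos m0 I hIm
  have hμItop : μ I ≠ ⊤ := (prob_le_one.trans_lt ENNReal.one_lt_top).ne
  set t : ℝ≥0∞ := ENNReal.ofReal (1 - a) * μ I with ht
  have htlt : t < μ I := by
    have h1 : ENNReal.ofReal (1 - a) < 1 := ENNReal.ofReal_lt_one.mpr (by linarith)
    calc t < 1 * μ I := by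
          rw [ht, ENNReal.mul_lt_mul_iff_left hμI0.ne' hμItop]; exact h1
      _ = μ I := one_mul _
  -- the recursive step
  have key : ∀ s : {q : ℕ × Set X × ℝ≥0∞ // q.2.1 ∈ T.level q.1 ∧ q.2.2 < μ q.2.1},
      ∃ p : {q : ℕ × Set X × ℝ≥0∞ // q.2.1 ∈ T.level q.1 ∧ q.2.2 < μ q.2.1} × Finset (Set X),
        p.1.1.1 = s.1.1 + 1 ∧ p.1.1.2.1 ∈ T.child s.1.2.1 ∧ ↑p.2 ⊆ T.child s.1.2.1 ∧
        p.1.1.2.1 ∉ p.2 ∧ (∑ A ∈ p.2, μ A) + p.1.1.2.2 = s.1.2.2 ∧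
        p.1.1.2.1 ⊆ s.1.2.1 := by
    rintro ⟨⟨m, J, δ⟩, hJm, hδ⟩
    obtain ⟨S, K, hS, hK, hKS, hsum, hlt⟩ := T.step_exists hJm hδ
    exact ⟨(⟨(m+1, K, δ - ∑ A ∈ S, μ A), T.child_level hJm hK, hlt⟩, S),
      rfl, hK, hS, hKS, hsum, T.child_subset m J hJm K hK⟩
  choose nxt hm1 hKc hSc hKS hsumc hJsub using key
  obtain ⟨ch, hch0, hchS⟩ :
      ∃ ch : ℕ → {q : ℕ × Set X × ℝ≥0∞ // q.2.1 ∈ T.level q.1 ∧ q.2.2 < μ q.2.1},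
        ch 0 = ⟨(m0, I, t), hIm, htlt⟩ ∧ ∀ n, ch (n+1) = (nxt (ch n)).1 :=
    ⟨fun n => Nat.rec ⟨(m0, I, t), hIm, htlt⟩ (fun _ s => (nxt s).1) n, rfl, fun _ => rfl⟩
  obtain ⟨Jc, hJcd⟩ : ∃ Jc : ℕ → Set X, ∀ n, Jc n = (ch n).1.2.1 := ⟨_, fun _ => rfl⟩
  obtain ⟨δc, hδcd⟩ : ∃ δc : ℕ → ℝ≥0∞, ∀ n, δc n = (ch n).1.2.2 := ⟨_, fun _ => rfl⟩
  obtain ⟨Sf, hSfd⟩ : ∃ Sf : ℕ → Finset (Set X), ∀ n, Sf n = (nxt (ch n)).2 :=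
    ⟨_, fun _ => rfl⟩
  have hJc0 : Jc 0 = I := by rw [hJcd 0, hch0]
  have hδc0 : δc 0 = t := by rw [hδcd 0, hch0]
  have hlev : ∀ n, Jc n ∈ T.level ((ch n).1.1) := by
    intro n; rw [hJcd n]; exact (ch n).2.1
  have hδlt : ∀ n, δc n < μ (Jc n) := by
    intro n; rw [hδcd n, hJcd n]; exact (ch n).2.2
  have hlevnum : ∀ n, (ch n).1.1 = m0 + n := by
    intro n
    induction n with
    | zero => rw [hch0]; rfl
    | succ n ih => rw [hchS n, hm1 (ch n), ih]; rfl
  have hJchild : ∀ n, Jc (n+1) ∈ T.child (Jc n) := by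
    intro n; rw [hJcd (n+1), hJcd n, hchS n]; exact hKc (ch n)
  have hSchild : ∀ n, ↑(Sf n) ⊆ T.child (Jc n) := by
    intro n; rw [hSfd n, hJcd n]; exact hSc (ch n)
  have hKSn : ∀ n, Jc (n+1) ∉ Sf n := by
    intro n; rw [hJcd (n+1), hSfd n, hchS n]; exact hKS (ch n)
  have htel1 : ∀ n, (∑ A ∈ Sf n, μ A) + δc (n+1) = δc n := by
    intro n; rw [hSfd n, hδcd (n+1), hδcd n, hchS n]; exact hsumc (ch n)
  have hJstep : ∀ n, Jc (n+1) ⊆ Jc n := by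
    intro n; rw [hJcd (n+1), hJcd n, hchS n]; exact hJsub (ch n)
  have hJmono : ∀ n k, Jc (n + k) ⊆ Jc n := by
    intro n k
    induction k with
    | zero => exact subset_rfl
    | succ k ih => exact (hJstep (n+k)).trans ih
  have hJI : ∀ n, Jc n ⊆ I := by
    intro n
    have := hJmono 0 n
    rwa [Nat.zero_add, hJc0] at this
  have hSsubJ : ∀ n, ∀ A ∈ Sf n, A ⊆ Jc n := fun n A hA =>
    T.child_subset _ _ (hlev n) A (hSchild n hA)
  have hSmem : ∀ n, ∀ A ∈ Sf n, A ∈ T.level ((ch n).1.1 + 1) := fun n A hA =>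
    T.child_level (hlev n) (hSchild n hA)
  -- the family
  obtain ⟨F, hFd⟩ : ∃ F : Set (Set X), F = ⋃ n, (↑(Sf n) : Set (Set X)) := ⟨_, rfl⟩
  have hmemF : ∀ A, A ∈ F ↔ ∃ n, A ∈ Sf n := by
    intro A; rw [hFd]; simp
  have hFc : F.Countable := by
    rw [hFd]; exact Set.countable_iUnion (fun n => (Sf n).countable_toSet)
  -- cross almost-disjointness
  have hcross : ∀ n, ∀ A ∈ Sf n, μ (A ∩ Jc (n+1)) = 0 := by
    intro n A hA
    exact T.child_almost_disjoint _ _ (hlev n) A (hSchild n hA) _ (hJchild n)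
      (fun h => hKSn n (h ▸ hA))
  have hdir : ∀ n n', n ≤ n' → ∀ A ∈ Sf n, ∀ B ∈ Sf n', A ≠ B → μ (A ∩ B) = 0 := by
    intro n n' hnn A hA B hB hne
    rcases eq_or_lt_of_le hnn with rfl | hlt
    · exact T.child_almost_disjoint _ _ (hlev n) A (hSchild n hA) B (hSchild n hB) hne
    · have hBsub : B ⊆ Jc (n+1) := by
        obtain ⟨k, rfl⟩ := Nat.exists_eq_add_of_le hlt
        exact (hSsubJ _ B hB).trans (hJmono (n+1) k)
      have h2 : μ (A ∩ B) ≤ μ (A ∩ Jc (n+1)) :=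
        measure_mono (inter_subset_inter_right A hBsub)
      exact le_antisymm (h2.trans_eq (hcross n A hA)) (zero_le)
  have hpair : ∀ A ∈ F, ∀ B ∈ F, A ≠ B → μ (A ∩ B) = 0 := by
    intro A hA B hB hne
    obtain ⟨n, hAn⟩ := (hmemF A).mp hA
    obtain ⟨n', hBn⟩ := (hmemF B).mp hB
    rcases le_total n n' with h | h
    · exact hdir n n' h A hAn B hBn hne
    · rw [Set.inter_comm]; exact hdir n' n h B hBn A hAn hne.symm
  -- the partial unions
  obtain ⟨U, hUd0⟩ : ∃ U : ℕ → Set X, ∀ n, U n = ⋃ A ∈ Sf n, A := ⟨_, fun _ => rfl⟩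
  have hUmeas : ∀ n, MeasurableSet (U n) := by
    intro n; rw [hUd0 n]
    exact (Sf n).measurableSet_biUnion (fun A hA => T.mem_meas _ A (hSmem n A hA))
  have hUeq : ∀ n, μ (U n) = ∑ A ∈ Sf n, μ A := by
    intro n; rw [hUd0 n]
    refine measure_biUnion_finset₀ ?_
      (fun A hA => (T.mem_meas _ A (hSmem n A hA)).nullMeasurableSet)
    intro A hA B hB hne
    exact T.child_almost_disjoint _ _ (hlev n) A (hSchild n hA) B (hSchild n hB) hne
  have hUsub : ∀ n, U n ⊆ Jc n := by
    intro n; rw [hUd0 n]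
    exact Set.iUnion₂_subset (fun A hA => hSsubJ n A hA)
  have hUd' : ∀ n n', n < n' → μ (U n ∩ U n') = 0 := by
    intro n n' hlt
    have hsub : U n ∩ U n' ⊆ ⋃ A ∈ Sf n, (A ∩ Jc (n+1)) := by
      rintro x ⟨hx1, hx2⟩
      rw [hUd0 n] at hx1
      simp only [Set.mem_iUnion] at hx1 ⊢
      obtain ⟨A, hA, hxA⟩ := hx1
      refine ⟨A, hA, hxA, ?_⟩
      have hsub2 : U n' ⊆ Jc (n+1) := by
        obtain ⟨k, rfl⟩ := Nat.exists_eq_add_of_le hlt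
        exact (hUsub _).trans (hJmono (n+1) k)
      exact hsub2 hx2
    have h0 : μ (⋃ A ∈ Sf n, (A ∩ Jc (n+1))) = 0 :=
      (measure_biUnion_null_iff (Sf n).countable_toSet).mpr (fun A hA => hcross n A hA)
    exact le_antisymm ((measure_mono hsub).trans_eq h0) (zero_le)
  have hUad : Pairwise (Function.onFun (AEDisjoint μ) U) := by
    intro n n' hne
    rcases hne.lt_or_gt with h | h
    · exact hUd' n n' h
    · have := hUd' n' n h
      rwa [Set.inter_comm] at this
  have hUnion : μ (⋃ n, U n) = ∑' n, μ (U n) :=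
    measure_iUnion₀ hUad (fun n => (hUmeas n).nullMeasurableSet)
  have hsUF : ⋃₀ F = ⋃ n, U n := by
    rw [hFd, Set.sUnion_iUnion]
    refine Set.iUnion_congr (fun n => ?_)
    rw [hUd0 n]
    ext x; simp
  -- telescoping
  have htel : ∀ N, (∑ n ∈ Finset.range N, ∑ A ∈ Sf n, μ A) + δc N = t := by
    intro N
    induction N with
    | zero => simpa using hδc0
    | succ N ih =>
      rw [Finset.sum_range_succ, add_assoc, htel1 N, ih]
  have htsum : ∑' n, μ (U n) = t := by
    have hle : ∑' n, μ (U n) ≤ t := by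
      rw [ENNReal.tsum_eq_iSup_nat]
      refine iSup_le (fun N => ?_)
      calc ∑ n ∈ Finset.range N, μ (U n) = ∑ n ∈ Finset.range N, ∑ A ∈ Sf n, μ A :=
            Finset.sum_congr rfl (fun n _ => hUeq n)
        _ ≤ (∑ n ∈ Finset.range N, ∑ A ∈ Sf n, μ A) + δc N := le_self_add
        _ = t := htel N
    refine le_antisymm hle ?_
    refine ENNReal.le_of_forall_pos_le_add (fun ε hε _ => ?_)
    obtain ⟨N0, hN0⟩ := ENNReal.tendsto_atTop_zero.mp T.level_small ε
      (ENNReal.coe_pos.mpr hε)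
    have hδε : δc N0 ≤ (ε : ℝ≥0∞) := by
      have h1 : μ (Jc N0) ≤ ⨆ K ∈ T.level (m0 + N0), μ K := by
        have h2 := hlev N0
        rw [hlevnum N0] at h2
        exact le_iSup₂ (f := fun K (_ : K ∈ T.level (m0 + N0)) => μ K) (Jc N0) h2
      have h3 := hN0 (m0 + N0) (Nat.le_add_left N0 m0)
      exact ((hδlt N0).le.trans h1).trans h3
    calc t = (∑ n ∈ Finset.range N0, ∑ A ∈ Sf n, μ A) + δc N0 := (htel N0).symm
      _ ≤ (∑ n ∈ Finset.range N0, μ (U n)) + ε := by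
          refine add_le_add (le_of_eq ?_) hδε
          exact Finset.sum_congr rfl (fun n _ => (hUeq n).symm)
      _ ≤ (∑' n, μ (U n)) + ε := add_le_add_left (ENNReal.sum_le_tsum _) _
  have hmeasU : μ (⋃₀ F) = t := by
    rw [hsUF, hUnion, htsum]
  -- tsum over F
  haveI : Countable F := hFc.to_subtype
  have htsumF : ∑' J : F, μ (J : Set X) = t := by
    have hd : Pairwise (Function.onFun (AEDisjoint μ) (fun J : F => (J : Set X))) := by
      rintro ⟨A, hA⟩ ⟨B, hB⟩ hne
      exact hpair A hA B hB (fun h => hne (Subtype.ext h))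
    have hm : ∀ J : F, NullMeasurableSet (J : Set X) μ := by
      rintro ⟨A, hA⟩
      obtain ⟨n, hAn⟩ := (hmemF A).mp hA
      exact (T.mem_meas _ A (hSmem n A hAn)).nullMeasurableSet
    have h5 := measure_iUnion₀ hd hm
    rw [← Set.sUnion_eq_iUnion, hmeasU] at h5
    exact h5.symm
  refine ⟨F, hFc, ?_, ?_, hpair, hmeasU, htsumF⟩
  · intro A hA
    obtain ⟨n, hAn⟩ := (hmemF A).mp hA
    exact ⟨(ch n).1.1 + 1, hSmem n A hAn⟩
  · intro A hA
    obtain ⟨n, hAn⟩ := (hmemF A).mp hA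
    exact (hSsubJ n A hAn).trans (hJI n)
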